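/- Let H ≻ 0 symmetric, 0 ⪯ H_w ⪯ H, λ > 0, H_λ = H + λI, σ_max the largest eigenvalue of H. Then the matrix Λ := ½ H_λ^{1/2}(H_λ − H_w)^{-1} H_w (H_λ − H_w)^{-1} H_λ^{1/2} is symmetric with eigenvalues bounded between 0 and σ_max(σ_max + λ)/(2λ²). -/

import Mathlib

open Matrix Pointwise



variable {d : ℕ}

lemma psd_smul' {M : Matrix (Fin d) (Fin d) ℝ} (hM : M.PosSemidef) {c : ℝ} (hc : 0 ≤ c) :
    (c • M).PosSemidef := by
  refine PosSemidef.of_dotProduct_mulVec_nonneg ?_ (fun x => ?_)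
  · unfold Matrix.IsHermitian
    rw [conjTranspose_smul, hM.isHermitian.eq]
    simp
  · rw [smul_mulVec, dotProduct_smul, smul_eq_mul]
    exact mul_nonneg hc (hM.dotProduct_mulVec_nonneg x)

lemma spec_nonneg' {M : Matrix (Fin d) (Fin d) ℝ} (hM : M.PosSemidef) :
    ∀ μ ∈ spectrum ℝ M, 0 ≤ μ := by
  intro μ hμ
  rw [hM.isHermitian.spectrum_real_eq_range_eigenvalues] at hμ
  obtain ⟨i, rfl⟩ := hμ
  exact hM.eigenvalues_nonneg i

lemma smul_one_sub_psd' {M : Matrix (Fin d) (Fin d) ℝ} (hM : M.IsHermitian) {c : ℝ}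
    (hc : ∀ μ ∈ spectrum ℝ M, μ ≤ c) :
    (c • (1 : Matrix (Fin d) (Fin d) ℝ) - M).PosSemidef := by
  have halg : c • (1 : Matrix (Fin d) (Fin d) ℝ) = algebraMap ℝ _ c :=
    (Algebra.algebraMap_eq_smul_one c).symm
  have hherm : (c • (1 : Matrix (Fin d) (Fin d) ℝ) - M).IsHermitian := by
    unfold Matrix.IsHermitian
    rw [conjTranspose_sub, conjTranspose_smul, hM.eq, conjTranspose_one]
    simp
  apply hherm.posSemidef_iff_eigenvalues_nonneg.mpr
  intro i
  have hmem := hherm.eigenvalues_mem_spectrum_real i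
  have hspec : spectrum ℝ (c • (1 : Matrix (Fin d) (Fin d) ℝ) - M) = ({c} : Set ℝ) - spectrum ℝ M := by
    rw [halg]; exact (spectrum.singleton_sub_eq M c).symm
  rw [hspec] at hmem
  obtain ⟨x, hx, y, hy, hxy⟩ := Set.mem_sub.mp hmem
  rw [Set.mem_singleton_iff] at hx
  subst hx
  rw [← hxy, Pi.zero_apply]
  linarith [hc y hy]

lemma spec_le' {M : Matrix (Fin d) (Fin d) ℝ} {c : ℝ}
    (h : (c • (1 : Matrix (Fin d) (Fin d) ℝ) - M).PosSemidef) :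
    ∀ μ ∈ spectrum ℝ M, μ ≤ c := by
  intro μ hμ
  have halg : c • (1 : Matrix (Fin d) (Fin d) ℝ) = algebraMap ℝ _ c :=
    (Algebra.algebraMap_eq_smul_one c).symm
  have hmem : c - μ ∈ spectrum ℝ (c • (1 : Matrix (Fin d) (Fin d) ℝ) - M) := by
    have hspec : spectrum ℝ (c • (1 : Matrix (Fin d) (Fin d) ℝ) - M) = ({c} : Set ℝ) - spectrum ℝ M := by
      rw [halg]; exact (spectrum.singleton_sub_eq M c).symm
    rw [hspec]
    exact Set.sub_mem_sub rfl hμ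
  linarith [spec_nonneg' h _ hmem]

/-- The positive semidefinite square root of a positive semidefinite matrix
(the definition `Matrix.PosSemidef.sqrt` of the older Mathlib, removed since). -/
noncomputable def Matrix.PosSemidef.sqrt {n : Type*} [Fintype n] [DecidableEq n]
    {A : Matrix n n ℝ} (hA : A.PosSemidef) : Matrix n n ℝ :=
  hA.1.eigenvectorUnitary.1 * diagonal ((↑) ∘ (√·) ∘ hA.1.eigenvalues) *
  (star hA.1.eigenvectorUnitary : Matrix n n ℝ)

lemma Matrix.PosSemidef.posSemidef_sqrt {n : Type*} [Fintype n] [DecidableEq n]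
    {A : Matrix n n ℝ} (hA : A.PosSemidef) : hA.sqrt.PosSemidef := by
  unfold Matrix.PosSemidef.sqrt
  have hD : (diagonal ((↑) ∘ (√·) ∘ hA.1.eigenvalues) : Matrix n n ℝ).PosSemidef :=
    PosSemidef.diagonal (fun i => by simp [Real.sqrt_nonneg])
  have := hD.mul_mul_conjTranspose_same (hA.1.eigenvectorUnitary : Matrix n n ℝ)
  simpa [Unitary.coe_star, Matrix.star_eq_conjTranspose] using this

lemma Matrix.PosSemidef.sqrt_mul_self {n : Type*} [Fintype n] [DecidableEq n]
    {A : Matrix n n ℝ} (hA : A.PosSemidef) : hA.sqrt * hA.sqrt = A := by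
  unfold Matrix.PosSemidef.sqrt
  set U := hA.1.eigenvectorUnitary
  have hUU : (star U : Matrix n n ℝ) * (U : Matrix n n ℝ) = 1 := Unitary.coe_star_mul_self U
  have hDD : (diagonal ((↑) ∘ (√·) ∘ hA.1.eigenvalues) : Matrix n n ℝ) *
      diagonal ((↑) ∘ (√·) ∘ hA.1.eigenvalues) = diagonal (RCLike.ofReal ∘ hA.1.eigenvalues) := by
    rw [diagonal_mul_diagonal]
    congr 1; funext i
    simp [Real.mul_self_sqrt (hA.eigenvalues_nonneg i)]
  calc (U : Matrix n n ℝ) * diagonal ((↑) ∘ (√·) ∘ hA.1.eigenvalues) * (star U : Matrix n n ℝ) *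
        ((U : Matrix n n ℝ) * diagonal ((↑) ∘ (√·) ∘ hA.1.eigenvalues) * (star U : Matrix n n ℝ))
      = (U : Matrix n n ℝ) * (diagonal ((↑) ∘ (√·) ∘ hA.1.eigenvalues) *
          ((star U : Matrix n n ℝ) * (U : Matrix n n ℝ)) *
          diagonal ((↑) ∘ (√·) ∘ hA.1.eigenvalues)) * (star U : Matrix n n ℝ) := by
        simp only [Matrix.mul_assoc]
    _ = A := by
        rw [hUU, Matrix.mul_one, hDD]
        conv_rhs => rw [hA.1.spectral_theorem]
        simp [U, Unitary.conjStarAlgAut_apply]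

/-- With `0 ⪯ H_w ⪯ H`, `λ > 0`, `H_λ = H + λI`, `σ_max` the largest eigenvalue of `H`,
the matrix `Λ := ½ H_λ¹ᐟ² (H_λ − H_w)⁻¹ H_w (H_λ − H_w)⁻¹ H_λ¹ᐟ²` is symmetric with
eigenvalues in `[0, σ_max (σ_max + λ)/(2λ²)]`. -/
theorem stmt13 (d : ℕ) (H Hw : Matrix (Fin d) (Fin d) ℝ) (l σmax : ℝ)
    (hH : H.PosSemidef) (hHw : Hw.PosSemidef) (hle : (H - Hw).PosSemidef)
    (hl : 0 < l)
    (hP : (H + l • (1 : Matrix (Fin d) (Fin d) ℝ)).PosSemidef)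
    (hσ_mem : σmax ∈ spectrum ℝ H) (hσ_max : ∀ μ ∈ spectrum ℝ H, μ ≤ σmax) :
    ((1 / 2 : ℝ) • (hP.sqrt * ((H + l • (1 : Matrix (Fin d) (Fin d) ℝ)) - Hw)⁻¹ * Hw *
        ((H + l • (1 : Matrix (Fin d) (Fin d) ℝ)) - Hw)⁻¹ * hP.sqrt)).IsSymm ∧
    ∀ μ ∈ spectrum ℝ
        ((1 / 2 : ℝ) • (hP.sqrt * ((H + l • (1 : Matrix (Fin d) (Fin d) ℝ)) - Hw)⁻¹ * Hw *
          ((H + l • (1 : Matrix (Fin d) (Fin d) ℝ)) - Hw)⁻¹ * hP.sqrt)),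
      μ ∈ Set.Icc (0 : ℝ) (σmax * (σmax + l) / (2 * l ^ 2)) := by
  have hl' : l ≠ 0 := hl.ne'
  have hl2 : (0:ℝ) < l ^ 2 := by positivity
  have hσ0 : 0 ≤ σmax := spec_nonneg' hH σmax hσ_mem
  set Hl := H + l • (1 : Matrix (Fin d) (Fin d) ℝ) with hHl
  set A := Hl - Hw with hAdef
  set S := hP.sqrt with hSdef
  -- basic facts
  have hσH : (σmax • (1 : Matrix (Fin d) (Fin d) ℝ) - H).PosSemidef :=
    smul_one_sub_psd' hH.isHermitian hσ_max
  have hl1pd : (l • (1 : Matrix (Fin d) (Fin d) ℝ)).PosDef := by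
    rw [smul_one_eq_diagonal]
    exact posDef_diagonal_iff.mpr fun _ => hl
  have hA_eq : A = (H - Hw) + l • (1 : Matrix (Fin d) (Fin d) ℝ) := by
    rw [hAdef, hHl]; abel
  have hApd : A.PosDef := by rw [hA_eq]; exact Matrix.PosDef.posSemidef_add hle hl1pd
  have hdet : IsUnit A.det := (Matrix.isUnit_iff_isUnit_det A).mp hApd.isUnit
  have hAinv : A⁻¹ * A = 1 := nonsing_inv_mul A hdet
  have hAinv' : A * A⁻¹ = 1 := mul_nonsing_inv A hdet
  have hAiH : A⁻¹.IsHermitian := hApd.isHermitian.inv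
  have hSH : S.IsHermitian := hP.posSemidef_sqrt.isHermitian
  have hSS : S * S = Hl := hP.sqrt_mul_self
  -- step: A*A - l²•1 ⪰ 0
  have hquad : (A * A - (l ^ 2) • (1 : Matrix (Fin d) (Fin d) ℝ)).PosSemidef := by
    have hid : A * A - (l ^ 2) • (1 : Matrix (Fin d) (Fin d) ℝ)
        = (H - Hw) * (H - Hw) + (2 * l) • (H - Hw) := by
      rw [hA_eq]
      simp only [add_mul, mul_add, Matrix.smul_mul, Matrix.mul_smul, smul_smul,
        Matrix.one_mul, Matrix.mul_one]
      module
    rw [hid]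
    have hsq : ((H - Hw) * (H - Hw)).PosSemidef := by
      have := hle.pow 2; rwa [pow_two] at this
    exact hsq.add (psd_smul' hle (by positivity))
  -- step: 1 - l²•A⁻²  ⪰ 0
  have h1 : ((1 : Matrix (Fin d) (Fin d) ℝ) - (l ^ 2) • (A⁻¹ * A⁻¹)).PosSemidef := by
    have h := hquad.conjTranspose_mul_mul_same A⁻¹
    rw [hAiH.eq] at h
    have hid : A⁻¹ * (A * A - (l ^ 2) • (1 : Matrix (Fin d) (Fin d) ℝ)) * A⁻¹
        = (1 : Matrix (Fin d) (Fin d) ℝ) - (l ^ 2) • (A⁻¹ * A⁻¹) := by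
      rw [mul_sub, sub_mul]
      rw [show A⁻¹ * (A * A) * A⁻¹ = 1 from by
        rw [← mul_assoc, hAinv, Matrix.one_mul, hAinv']]
      rw [Matrix.mul_smul, Matrix.smul_mul, Matrix.mul_one]
    rwa [hid] at h
  -- step: σmax•1 - Hw ⪰ 0
  have hHwσ : (σmax • (1 : Matrix (Fin d) (Fin d) ℝ) - Hw).PosSemidef := by
    have h := hσH.add hle
    have hid : (σmax • (1 : Matrix (Fin d) (Fin d) ℝ) - H) + (H - Hw)
        = σmax • (1 : Matrix (Fin d) (Fin d) ℝ) - Hw := by abel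
    rwa [hid] at h
  -- conjugate by A⁻¹
  have hc : (σmax • (A⁻¹ * A⁻¹) - A⁻¹ * Hw * A⁻¹).PosSemidef := by
    have h := hHwσ.conjTranspose_mul_mul_same A⁻¹
    rw [hAiH.eq] at h
    have hid : A⁻¹ * (σmax • (1 : Matrix (Fin d) (Fin d) ℝ) - Hw) * A⁻¹
        = σmax • (A⁻¹ * A⁻¹) - A⁻¹ * Hw * A⁻¹ := by
      rw [mul_sub, sub_mul, Matrix.mul_smul, Matrix.smul_mul, Matrix.mul_one]
    rwa [hid] at h
  -- conjugate by S
  have hcS : (σmax • (S * (A⁻¹ * A⁻¹) * S) - S * A⁻¹ * Hw * A⁻¹ * S).PosSemidef := by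
    have h := hc.conjTranspose_mul_mul_same S
    rw [hSH.eq] at h
    have hid : S * (σmax • (A⁻¹ * A⁻¹) - A⁻¹ * Hw * A⁻¹) * S
        = σmax • (S * (A⁻¹ * A⁻¹) * S) - S * A⁻¹ * Hw * A⁻¹ * S := by
      rw [mul_sub, sub_mul, Matrix.mul_smul, Matrix.smul_mul]
      rw [show S * (A⁻¹ * Hw * A⁻¹) * S = S * A⁻¹ * Hw * A⁻¹ * S from by
        simp only [mul_assoc]]
    rwa [hid] at h
  have hdS : (Hl - (l ^ 2) • (S * (A⁻¹ * A⁻¹) * S)).PosSemidef := by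
    have h := h1.conjTranspose_mul_mul_same S
    rw [hSH.eq] at h
    have hid : S * ((1 : Matrix (Fin d) (Fin d) ℝ) - (l ^ 2) • (A⁻¹ * A⁻¹)) * S
        = Hl - (l ^ 2) • (S * (A⁻¹ * A⁻¹) * S) := by
      rw [mul_sub, sub_mul, Matrix.mul_smul, Matrix.smul_mul, Matrix.mul_one, hSS]
    rwa [hid] at h
  have he : ((σmax + l) • (1 : Matrix (Fin d) (Fin d) ℝ) - Hl).PosSemidef := by
    have hid : (σmax + l) • (1 : Matrix (Fin d) (Fin d) ℝ) - Hl
        = σmax • (1 : Matrix (Fin d) (Fin d) ℝ) - H := by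
      rw [hHl, add_smul]; abel
    rw [hid]; exact hσH
  -- Λ is PSD
  have hΛpsd : ((1 / 2 : ℝ) • (S * A⁻¹ * Hw * A⁻¹ * S)).PosSemidef := by
    have h := hHw.conjTranspose_mul_mul_same (A⁻¹ * S)
    rw [conjTranspose_mul, hAiH.eq, hSH.eq] at h
    have hid : (S * A⁻¹) * Hw * (A⁻¹ * S) = S * A⁻¹ * Hw * A⁻¹ * S := by
      simp only [mul_assoc]
    rw [hid] at h
    exact psd_smul' h (by norm_num)
  -- final upper bound
  have hfin : ((σmax * (σmax + l) / (2 * l ^ 2)) • (1 : Matrix (Fin d) (Fin d) ℝ)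
      - (1 / 2 : ℝ) • (S * A⁻¹ * Hw * A⁻¹ * S)).PosSemidef := by
    have h := ((psd_smul' he (by positivity : (0:ℝ) ≤ σmax / (2 * l ^ 2))).add
        (psd_smul' hdS (by positivity : (0:ℝ) ≤ σmax / (2 * l ^ 2)))).add
        (psd_smul' hcS (by norm_num : (0:ℝ) ≤ (1/2 : ℝ)))
    have hid : (σmax / (2 * l ^ 2)) • ((σmax + l) • (1 : Matrix (Fin d) (Fin d) ℝ) - Hl)
        + (σmax / (2 * l ^ 2)) • (Hl - (l ^ 2) • (S * (A⁻¹ * A⁻¹) * S))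
        + (1 / 2 : ℝ) • (σmax • (S * (A⁻¹ * A⁻¹) * S) - S * A⁻¹ * Hw * A⁻¹ * S)
        = (σmax * (σmax + l) / (2 * l ^ 2)) • (1 : Matrix (Fin d) (Fin d) ℝ)
          - (1 / 2 : ℝ) • (S * A⁻¹ * Hw * A⁻¹ * S) := by
      match_scalars <;> field_simp <;> ring
    rwa [hid] at h
  constructor
  · have h := hΛpsd.isHermitian
    rw [Matrix.IsHermitian, conjTranspose_eq_transpose_of_trivial] at h
    exact h
  · intro μ hμ
    exact ⟨spec_nonneg' hΛpsd μ hμ, spec_le' hfin μ hμ⟩
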